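/- With X_n = (1/n) I_n ⊗ X̃₁ + (1/n²) E_n ⊗ X̂₁, A_n = I_n ⊗ A, B_n = I_n ⊗ B, R_n = I_n ⊗ R, the eigenvalues of A_n − n B_n R_n⁻¹ B_n' X_n are the eigenvalues of A − B R⁻¹ B' X̃₁ (with multiplicity n−1) together with the eigenvalues of A − B R⁻¹ B'(X̃₁ + X̂₁). In particular, if A − B R⁻¹ B' X̃₁ and A − B R⁻¹ B'(X̃₁ + X̂₁) are both Hurwitz, then A_n − n B_n R_n⁻¹ B_n' X_n is Hurwitz. -/

import Mathlib

open Matrix Polynomial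
open scoped Kronecker

/-- The n×n matrix of ones. -/
def onesMatrix (n : ℕ) : Matrix (Fin n) (Fin n) ℝ := Matrix.of fun _ _ => 1

/-- A real matrix is Hurwitz if all its (complex) eigenvalues have negative real part. -/
def Hurwitz {ι : Type*} [Fintype ι] [DecidableEq ι] (M : Matrix ι ι ℝ) : Prop :=
  ∀ μ ∈ spectrum ℂ (M.map (algebraMap ℝ ℂ)), μ.re < 0

section aux
variable {R : Type*} [CommRing R] {n m : Type*} [DecidableEq n] [Fintype n] [DecidableEq m] [Fintype m]

lemma my_charmatrix_blockDiagonal (f : m → Matrix n n R) :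
    charmatrix (blockDiagonal f) = blockDiagonal (fun i => charmatrix (f i)) := by
  unfold charmatrix
  have h0 : (fun i => (scalar n) (X : R[X]) - C.mapMatrix (f i))
      = (fun _ => (scalar n) (X : R[X])) - (fun i => C.mapMatrix (f i)) := rfl
  rw [h0, blockDiagonal_sub]
  congr 1
  · rw [scalar_apply]
    simp only [scalar_apply]
    rw [blockDiagonal_diagonal]
  · simp only [RingHom.mapMatrix_apply]
    rw [blockDiagonal_map _ _ (map_zero C)]

lemma my_charpoly_blockDiagonal (f : m → Matrix n n R) :
    (blockDiagonal f).charpoly = ∏ i, (f i).charpoly := by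
  rw [Matrix.charpoly, my_charmatrix_blockDiagonal, det_blockDiagonal]
  rfl

lemma my_charpoly_similar (S T M : Matrix n n R) (hST : S * T = 1) :
    (S * M * T).charpoly = M.charpoly := by
  have h1 : charmatrix (S * M * T) = (S.map C) * charmatrix M * (T.map C) := by
    unfold charmatrix
    rw [Matrix.mul_sub, Matrix.sub_mul]
    congr 1
    · have hc : Commute ((scalar n) (X : R[X])) (T.map C) :=
        scalar_commute _ (fun r' => Commute.all _ _) _
      rw [Matrix.mul_assoc, hc.eq, ← Matrix.mul_assoc]
      have : S.map C * T.map C = 1 := by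
        rw [← Matrix.map_mul, hST, Matrix.map_one _ (map_zero C) (map_one C)]
      rw [this, Matrix.one_mul]
    · simp only [RingHom.mapMatrix_apply, Matrix.map_mul]
  have hdet : (S.map C).det * (T.map C).det = 1 := by
    rw [← det_mul, ← Matrix.map_mul, hST, Matrix.map_one _ (map_zero C) (map_one C), det_one]
  rw [Matrix.charpoly, Matrix.charpoly, h1, det_mul, det_mul, mul_right_comm, hdet, one_mul]

lemma my_eval_charpoly (M : Matrix n n R) (r : R) :
    M.charpoly.eval r = (scalar n r - M).det := by
  rw [Matrix.charpoly, eval_det, matPolyEquiv_charmatrix]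
  simp

omit [DecidableEq n] in
lemma my_mem_spectrum_iff {F : Type*} [Field F] [DecidableEq n] (M : Matrix n n F) (μ : F) :
    μ ∈ spectrum F M ↔ M.charpoly.IsRoot μ := by
  rw [spectrum.mem_iff, Matrix.isUnit_iff_isUnit_det, IsRoot, my_eval_charpoly,
    isUnit_iff_ne_zero, not_ne_iff]
  congr! 2

omit [DecidableEq m] [Fintype m] in
lemma my_kron_sub {l p q : Type*} (A : Matrix l m R) (B C : Matrix p q R) :
    A ⊗ₖ (B - C) = A ⊗ₖ B - A ⊗ₖ C := by
  ext ⟨i, a⟩ ⟨j, b⟩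
  simp [Matrix.kroneckerMap_apply, mul_sub]

end aux

/-- The eigenvalues of A_n - n B_n R_n⁻¹ B_n' X_n are the eigenvalues of A - B R⁻¹ B' X̃₁ (with
multiplicity n-1) together with those of A - B R⁻¹ B'(X̃₁+X̂₁); in particular if the latter two
matrices are Hurwitz, so is the former. -/
theorem feedback_matrix_hurwitz (n d k : ℕ) (hn : 1 ≤ n)
    (A X₁tilde X₁hat : Matrix (Fin d) (Fin d) ℝ) (B : Matrix (Fin d) (Fin k) ℝ)
    (R : Matrix (Fin k) (Fin k) ℝ) (hR : IsUnit R.det)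
    (hdiag₁ : ∃ P : Matrix (Fin d) (Fin d) ℂ, IsUnit P.det ∧
      (P⁻¹ * (A - B * R⁻¹ * Bᵀ * X₁tilde).map (algebraMap ℝ ℂ) * P).IsDiag)
    (hdiag₂ : ∃ P : Matrix (Fin d) (Fin d) ℂ, IsUnit P.det ∧
      (P⁻¹ * (A - B * R⁻¹ * Bᵀ * (X₁tilde + X₁hat)).map (algebraMap ℝ ℂ) * P).IsDiag) :
    ((1 : Matrix (Fin n) (Fin n) ℝ) ⊗ₖ A
        - ((n : ℝ) • (((1 : Matrix (Fin n) (Fin n) ℝ) ⊗ₖ B)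
            * ((1 : Matrix (Fin n) (Fin n) ℝ) ⊗ₖ R)⁻¹
            * ((1 : Matrix (Fin n) (Fin n) ℝ) ⊗ₖ B)ᵀ))
          * ((n : ℝ)⁻¹ • ((1 : Matrix (Fin n) (Fin n) ℝ) ⊗ₖ X₁tilde)
            + ((n : ℝ)^2)⁻¹ • (onesMatrix n ⊗ₖ X₁hat))).charpoly
      = (A - B * R⁻¹ * Bᵀ * X₁tilde).charpoly ^ (n - 1)
        * (A - B * R⁻¹ * Bᵀ * (X₁tilde + X₁hat)).charpoly ∧
    (Hurwitz (A - B * R⁻¹ * Bᵀ * X₁tilde) → Hurwitz (A - B * R⁻¹ * Bᵀ * (X₁tilde + X₁hat)) →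
      Hurwitz ((1 : Matrix (Fin n) (Fin n) ℝ) ⊗ₖ A
        - ((n : ℝ) • (((1 : Matrix (Fin n) (Fin n) ℝ) ⊗ₖ B)
            * ((1 : Matrix (Fin n) (Fin n) ℝ) ⊗ₖ R)⁻¹
            * ((1 : Matrix (Fin n) (Fin n) ℝ) ⊗ₖ B)ᵀ))
          * ((n : ℝ)⁻¹ • ((1 : Matrix (Fin n) (Fin n) ℝ) ⊗ₖ X₁tilde)
            + ((n : ℝ)^2)⁻¹ • (onesMatrix n ⊗ₖ X₁hat)))) := by
  clear hdiag₁ hdiag₂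
  have hn0 : (n : ℝ) ≠ 0 := Nat.cast_ne_zero.mpr (by omega)
  set K : Matrix (Fin d) (Fin d) ℝ := B * R⁻¹ * Bᵀ with hK
  set F : Matrix (Fin d) (Fin d) ℝ := A - K * X₁tilde with hF
  set G : Matrix (Fin d) (Fin d) ℝ := K * X₁hat with hG
  have hFG : A - K * (X₁tilde + X₁hat) = F - G := by
    rw [hF, hG, Matrix.mul_add, sub_add_eq_sub_sub]
  set z : Fin n := ⟨0, hn⟩ with hz
  set S : Matrix (Fin n) (Fin n) ℝ := Matrix.of fun i j =>
    (if i = j then (1:ℝ) else 0) - (if i = z then 1 else 0) + (if j = z then 1 else 0) with hS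
  set T : Matrix (Fin n) (Fin n) ℝ := Matrix.of fun i j =>
    (if i = j then (1:ℝ) else 0) - (if i = z then 1 else 0) * (if j = z then 1 else 0)
      + (2 * (if i = z then 1 else 0) - 1) * (n:ℝ)⁻¹ with hT
  have hST : S * T = 1 := by
    ext i j
    rw [Matrix.mul_apply, Matrix.one_apply]
    simp only [hS, hT, Matrix.of_apply]
    by_cases hiz : i = z <;> by_cases hjz : j = z <;> by_cases hij : i = j <;>
      simp only [hiz, hjz, hij, if_true, if_false, eq_self_iff_true] <;>
      simp only [sub_mul, add_mul, mul_sub, mul_add, boole_mul, mul_boole, one_mul, mul_one,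
        zero_mul, mul_zero, ite_mul, zero_sub, sub_zero, zero_add, add_zero,
        Finset.sum_add_distrib, Finset.sum_sub_distrib, Finset.sum_ite_eq, Finset.sum_ite_eq',
        Finset.sum_const, Finset.card_univ, Fintype.card_fin, Finset.mem_univ, nsmul_eq_mul] <;>
      first
        | (field_simp; ring1)
        | (exact absurd (hij.symm.trans hiz) hjz)
        | (field_simp; simp [hiz, hjz, hij]; done)
        | (field_simp; simp [hiz, hjz, hij]; ring1)
        | (field_simp; simp [hiz, hjz, hij]; norm_num; done)
        | (field_simp; simp [hiz, hjz, hij, Ne.symm hjz]; done)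
        | (field_simp; simp [hiz, hjz, hij, Ne.symm hjz]; ring1)
        | (field_simp; simp [hiz, hjz, hij, Ne.symm hjz]; norm_num; done)
        | (field_simp; simp [hiz, hjz, hij, Ne.symm hiz]; done)
        | (field_simp; simp [hiz, hjz, hij, Ne.symm hiz]; ring1)
        | (field_simp; simp [hiz, hjz, hij, Ne.symm hiz]; norm_num; done)
        | (field_simp; simp [hiz, hjz, hij, Ne.symm hiz, Ne.symm hjz]; done)
        | (field_simp; simp [hiz, hjz, hij, Ne.symm hiz, Ne.symm hjz]; ring1)
        | (field_simp; simp [hiz, hjz, hij, Ne.symm hiz, Ne.symm hjz]; norm_num; done)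
  have hSE : S * Matrix.single z z (1:ℝ) = Matrix.of fun _ j => if z = j then (1:ℝ) else 0 := by
    ext i j
    rw [Matrix.mul_apply]
    simp only [hS, Matrix.of_apply, Matrix.single, mul_ite, mul_one, mul_zero]
    by_cases hj : z = j
    · subst hj
      simp only [and_self, eq_self_iff_true, and_true]
      rw [Finset.sum_ite_eq Finset.univ z (fun k =>
        (if i = k then (1:ℝ) else 0) - (if i = z then 1 else 0) + (if k = z then 1 else 0))]
      simp only [Finset.mem_univ, if_true, if_pos rfl]
      by_cases hiz : i = z <;> simp [hiz]
    · simp [hj]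
  have hSET : S * Matrix.single z z (1:ℝ) * T = (n:ℝ)⁻¹ • onesMatrix n := by
    rw [hSE]
    ext i j
    rw [Matrix.mul_apply]
    simp only [Matrix.of_apply, hT, Matrix.smul_apply, onesMatrix, Matrix.of_apply, smul_eq_mul,
      mul_one, boole_mul]
    rw [Finset.sum_ite_eq]
    simp only [Finset.mem_univ, if_true, if_pos rfl]
    by_cases hj : j = z
    · subst hj
      simp
      norm_num
    · simp only [hj, Ne.symm hj, if_neg, if_false, eq_self_iff_true, if_true]
      ring
  have hRinv : ((1 : Matrix (Fin n) (Fin n) ℝ) ⊗ₖ R)⁻¹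
      = (1 : Matrix (Fin n) (Fin n) ℝ) ⊗ₖ R⁻¹ := by
    rw [Matrix.inv_kronecker, inv_one]
  have hBT : ((1 : Matrix (Fin n) (Fin n) ℝ) ⊗ₖ B)ᵀ
      = (1 : Matrix (Fin n) (Fin n) ℝ) ⊗ₖ Bᵀ := by
    rw [← Matrix.kroneckerMap_transpose, transpose_one]
  have hnn : (n : ℝ) * ((n:ℝ)^2)⁻¹ = (n:ℝ)⁻¹ := by
    field_simp
  set Mbig := (1 : Matrix (Fin n) (Fin n) ℝ) ⊗ₖ A
        - ((n : ℝ) • (((1 : Matrix (Fin n) (Fin n) ℝ) ⊗ₖ B)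
            * ((1 : Matrix (Fin n) (Fin n) ℝ) ⊗ₖ R)⁻¹
            * ((1 : Matrix (Fin n) (Fin n) ℝ) ⊗ₖ B)ᵀ))
          * ((n : ℝ)⁻¹ • ((1 : Matrix (Fin n) (Fin n) ℝ) ⊗ₖ X₁tilde)
            + ((n : ℝ)^2)⁻¹ • (onesMatrix n ⊗ₖ X₁hat)) with hMbig
  have hKK : ((1 : Matrix (Fin n) (Fin n) ℝ) ⊗ₖ B) * ((1 : Matrix (Fin n) (Fin n) ℝ) ⊗ₖ R⁻¹)
      * ((1 : Matrix (Fin n) (Fin n) ℝ) ⊗ₖ Bᵀ) = (1 : Matrix (Fin n) (Fin n) ℝ) ⊗ₖ K := by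
    rw [← Matrix.mul_kronecker_mul, ← Matrix.mul_kronecker_mul, Matrix.one_mul, Matrix.one_mul,
      hK]
  have hKX : ((1 : Matrix (Fin n) (Fin n) ℝ) ⊗ₖ K) * ((1 : Matrix (Fin n) (Fin n) ℝ) ⊗ₖ X₁tilde)
      = (1 : Matrix (Fin n) (Fin n) ℝ) ⊗ₖ (K * X₁tilde) := by
    rw [← Matrix.mul_kronecker_mul, Matrix.one_mul]
  have hKH : ((1 : Matrix (Fin n) (Fin n) ℝ) ⊗ₖ K) * (onesMatrix n ⊗ₖ X₁hat)
      = onesMatrix n ⊗ₖ G := by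
    rw [← Matrix.mul_kronecker_mul, Matrix.one_mul, hG]
  have key : Mbig = (1 : Matrix (Fin n) (Fin n) ℝ) ⊗ₖ F
      - (n:ℝ)⁻¹ • (onesMatrix n ⊗ₖ G) := by
    rw [hMbig, hRinv, hBT, hKK, mul_add, smul_mul_assoc, smul_mul_assoc,
      mul_smul_comm, mul_smul_comm, smul_smul, smul_smul, mul_inv_cancel₀ hn0, one_smul,
      hnn, hKX, hKH, hF, my_kron_sub, sub_add_eq_sub_sub]
  set N := (1 : Matrix (Fin n) (Fin n) ℝ) ⊗ₖ F - Matrix.single z z (1:ℝ) ⊗ₖ G with hN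
  have hsim : Mbig = (S ⊗ₖ (1 : Matrix (Fin d) (Fin d) ℝ)) * N
      * (T ⊗ₖ (1 : Matrix (Fin d) (Fin d) ℝ)) := by
    rw [key, hN, Matrix.mul_sub, Matrix.sub_mul, ← Matrix.mul_kronecker_mul,
      ← Matrix.mul_kronecker_mul, ← Matrix.mul_kronecker_mul, ← Matrix.mul_kronecker_mul,
      Matrix.one_mul, Matrix.mul_one, Matrix.mul_one, hST, hSET, Matrix.smul_kronecker,
      Matrix.one_mul, Matrix.mul_one]
  have hSTkron : (S ⊗ₖ (1 : Matrix (Fin d) (Fin d) ℝ))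
      * (T ⊗ₖ (1 : Matrix (Fin d) (Fin d) ℝ)) = 1 := by
    rw [← Matrix.mul_kronecker_mul, hST, Matrix.one_mul, Matrix.one_kronecker_one]
  set e : (Fin n × Fin d) ≃ (Fin d × Fin n) := Equiv.prodComm _ _ with he
  have hblock : reindex e e N = blockDiagonal (fun i : Fin n => if i = z then F - G else F) := by
    ext ⟨a, i⟩ ⟨b, j⟩
    simp only [reindex_apply, submatrix_apply, hN, he, Equiv.prodComm_symm, Equiv.prodComm_apply,
      Prod.swap_prod_mk, Matrix.sub_apply, Matrix.kroneckerMap_apply, Matrix.one_apply,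
      Matrix.single, Matrix.of_apply, blockDiagonal_apply]
    by_cases hij : i = j
    · subst hij
      by_cases hiz : i = z
      · subst hiz
        simp [Matrix.sub_apply]
      · simp [hiz, Ne.symm hiz]
    · have hnand : ¬(z = i ∧ z = j) := fun h => hij (h.1.symm.trans h.2)
      simp [hij, hnand]
  have hprod : (∏ x : Fin n, (if x = z then (F - G).charpoly else F.charpoly))
      = F.charpoly ^ (n - 1) * (F - G).charpoly := by
    rw [← Finset.mul_prod_erase Finset.univ _ (Finset.mem_univ z), if_pos rfl]
    rw [Finset.prod_congr rfl (fun i hi => if_neg (Finset.ne_of_mem_erase hi)),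
      Finset.prod_const, Finset.card_erase_of_mem (Finset.mem_univ z), Finset.card_univ,
      Fintype.card_fin, mul_comm]
  have hchar : Mbig.charpoly = F.charpoly ^ (n - 1) * (F - G).charpoly := by
    rw [hsim, my_charpoly_similar _ _ _ hSTkron, ← Matrix.charpoly_reindex e N, hblock,
      my_charpoly_blockDiagonal]
    simp only [apply_ite Matrix.charpoly]
    exact hprod
  constructor
  · rw [hchar, hFG]
  · intro h1 h2 μ hμ
    rw [my_mem_spectrum_iff, Matrix.charpoly_map, hchar, Polynomial.map_mul,
      Polynomial.map_pow, IsRoot, eval_mul, eval_pow, mul_eq_zero, pow_eq_zero_iff'] at hμ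
    rcases hμ with ⟨hroot, -⟩ | hroot
    · exact h1 μ (by rw [my_mem_spectrum_iff, Matrix.charpoly_map]; exact hroot)
    · refine h2 μ ?_
      rw [my_mem_spectrum_iff, Matrix.charpoly_map, hFG]
      exact hroot
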